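/- arXiv:2111.11648 — 4 statements merged into one kernel-verified Lean document; each statement's English description precedes it below -/
import Mathlib

section
/- If an interface connects a state (ε⁻, σ⁻) with ε⁻ ≤ ε₁ₘ on the phase-1 branch (σ⁻ = E₁ε⁻) to a state (ε⁺, σ⁺) with ε⁺ > ε₂ₘ on the phase-2 branch (σ⁺ = E₂ε⁺), with ε⁻ ≠ ε⁺, and satisfies the Rankine–Hugoniot jump condition ρṡ² = (σ⁺ - σ⁻)/(ε⁺ - ε⁻), then ρṡ² < E₁; i.e., the interface speed satisfies |ṡ| < c₁ where c₁ = √(E₁/ρ). -/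
theorem interface_subsonic_wrt_phase1 (E1 E2 e1m e2m ρ sdot εm εp σm σp : ℝ)
    (hE : E2 < E1) (hE2 : 0 < E2) (hρ : 0 < ρ)
    (h1 : 0 < e1m) (h12 : e1m < e2m)
    (hεm : εm ≤ e1m) (hεp : e2m < εp)
    (hσm : σm = E1 * εm) (hσp : σp = E2 * εp)
    (hne : εm ≠ εp)
    (hjump : ρ * sdot^2 = (σp - σm) / (εp - εm)) :
    ρ * sdot^2 < E1 := by
  have hd : 0 < εp - εm := by linarith
  have hεp0 : 0 < εp := by linarith
  rw [hjump, div_lt_iff₀ hd, hσm, hσp]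
  nlinarith
end

section
/- If 𝓔 solves (1/E₂)σ̂(𝓔) - M₂(ν/c₂)𝓔' - (λ/c₂²)𝓔'' = M₂²𝓔 + C and the limits 𝓔(±∞) = 𝓔^{±∞} exist with 𝓔'(x̃) → 0 and 𝓔''(x̃) → 0 as x̃ → ±∞, and 𝓔^{+∞} ≠ 𝓔^{-∞}, then (σ̂(𝓔^{+∞}) - σ̂(𝓔^{-∞}))/(𝓔^{+∞} - 𝓔^{-∞}) = E₂M₂². -/
theorem far_field_chord_condition (E2 M2 ν lam c2 C : ℝ)
    (hE2 : 0 < E2) (hν : 0 < ν) (hlam : 0 < lam) (hc2 : 0 < c2)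
    (σ : ℝ → ℝ) (hσ : Continuous σ)
    (𝓔 : ℝ → ℝ) (h𝓔 : ContDiff ℝ 2 𝓔)
    (hode : ∀ x : ℝ,
      (1 / E2) * σ (𝓔 x) - M2 * (ν / c2) * deriv 𝓔 x
        - (lam / c2^2) * iteratedDeriv 2 𝓔 x = M2^2 * 𝓔 x + C)
    (Ep Em : ℝ)
    (hlimp : Filter.Tendsto 𝓔 Filter.atTop (nhds Ep))
    (hlimm : Filter.Tendsto 𝓔 Filter.atBot (nhds Em))
    (hdp : Filter.Tendsto (deriv 𝓔) Filter.atTop (nhds 0))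
    (hdm : Filter.Tendsto (deriv 𝓔) Filter.atBot (nhds 0))
    (hddp : Filter.Tendsto (iteratedDeriv 2 𝓔) Filter.atTop (nhds 0))
    (hddm : Filter.Tendsto (iteratedDeriv 2 𝓔) Filter.atBot (nhds 0))
    (hne : Ep ≠ Em) :
    (σ Ep - σ Em) / (Ep - Em) = E2 * M2^2 := by
  have key : ∀ (l : Filter ℝ) (L : ℝ), l.NeBot →
      Filter.Tendsto 𝓔 l (nhds L) →
      Filter.Tendsto (deriv 𝓔) l (nhds 0) →
      Filter.Tendsto (iteratedDeriv 2 𝓔) l (nhds 0) →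
      (1 / E2) * σ L = M2^2 * L + C := by
    intro l L hl h1 h2 h3
    have t1 : Filter.Tendsto (fun x => (1 / E2) * σ (𝓔 x)
        - M2 * (ν / c2) * deriv 𝓔 x - (lam / c2^2) * iteratedDeriv 2 𝓔 x) l
        (nhds ((1 / E2) * σ L - M2 * (ν / c2) * 0 - (lam / c2^2) * 0)) := by
      exact (((hσ.tendsto L).comp h1).const_mul _ |>.sub (h2.const_mul _)).sub
        (h3.const_mul _)
    have t2 : Filter.Tendsto (fun x => M2^2 * 𝓔 x + C) l (nhds (M2^2 * L + C)) :=
      (h1.const_mul _).add_const C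
    have := tendsto_nhds_unique (t1.congr fun x => hode x) t2
    simpa using this
  have hp := key Filter.atTop Ep inferInstance hlimp hdp hddp
  have hm := key Filter.atBot Em inferInstance hlimm hdm hddm
  have hd : Ep - Em ≠ 0 := sub_ne_zero.mpr hne
  field_simp at hp hm ⊢
  nlinarith [hp, hm]
end

section
/- For the phase-field model energy difference: if ε⁻ and ε⁺ satisfy σ_M = E₁ε⁺ = E₂ε⁻ and ½E₂(ε⁻)² + ΔΨ - σ_M ε⁻ = ½E₁(ε⁺)² - σ_M ε⁺, then σ_M² = 2ΔΨ/(1/E₂ - 1/E₁); hence the Maxwell stress of the dynamic phase-field model coincides with that of classical elasticity. -/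
theorem maxwell_stress_phase_field (E1 E2 ΔΨ σM εm εp : ℝ)
    (hE : E2 < E1) (hE2 : 0 < E2) (hΔΨ : 0 < ΔΨ)
    (h1 : σM = E1 * εp) (h2 : σM = E2 * εm)
    (heq : (1/2) * E2 * εm^2 + ΔΨ - σM * εm = (1/2) * E1 * εp^2 - σM * εp) :
    σM^2 = 2 * ΔΨ / (1 / E2 - 1 / E1) := by
  have hE1 : (0:ℝ) < E1 := hE2.trans hE
  have hne1 : E1 ≠ 0 := hE1.ne'
  have hne2 : E2 ≠ 0 := hE2.ne'
  have hεp : εp = σM / E1 := by field_simp [h1]; rw [h1]; ring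
  have hεm : εm = σM / E2 := by field_simp [h2]; rw [h2]; ring
  subst hεp hεm
  have hd : 1 / E2 - 1 / E1 ≠ 0 := by
    have : 1 / E1 < 1 / E2 := one_div_lt_one_div_of_lt hE2 hE
    linarith
  field_simp at heq
  have key : σM^2*(E1-E2) = 2*ΔΨ*(E1*E2) := by
    apply mul_left_cancel₀ (show (2*E1^2*E2^2:ℝ) ≠ 0 by positivity)
    linear_combination (-2*E1^2*E2^2) * heq
  rw [eq_div_iff hd]
  field_simp
  linear_combination key
end

section
/- For a quasistatic equilibrium configuration with constant stress σ₀ ∈ (E₂ε₂ₘ, E₁ε₁ₘ) in the two-well material, there exist uncountably many distinct single-interface strain fields ε(x) = σ₀/E₁ for x < s and ε(x) = σ₀/E₂ for x ≥ s (parametrized by the interface location s ∈ (0,L)) all satisfying the equilibrium field equation ∂ₓσ = 0 and the jump condition ⟦σ⟧ = 0; hence quasistatic equilibrium is nonunique. -/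
theorem quasistatic_nonuniqueness (E1 E2 e1m e2m σ0 L : ℝ)
    (hE : E2 < E1) (hE2 : 0 < E2)
    (h1 : 0 < e1m) (h12 : e1m < e2m) (hL : 0 < L)
    (hσ0lo : E2 * e2m < σ0) (hσ0hi : σ0 < E1 * e1m)
    (strainField : ℝ → ℝ → ℝ)
    (hstrain : strainField = fun s x => if x < s then σ0 / E1 else σ0 / E2)
    (stressField : ℝ → ℝ → ℝ)
    (hstress : stressField = fun s x =>
      if x < s then E1 * (σ0 / E1) else E2 * (σ0 / E2)) :
    Set.InjOn strainField (Set.Ioo 0 L) ∧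
    ¬ (strainField '' Set.Ioo 0 L).Countable ∧
    ∀ s ∈ Set.Ioo (0:ℝ) L,
      (∀ x : ℝ, stressField s x = σ0) ∧
      (∀ x : ℝ, deriv (stressField s) x = 0) := by
  have hE1 : (0:ℝ) < E1 := hE2.trans hE
  have hσ0 : 0 < σ0 := lt_trans (mul_pos hE2 (h1.trans h12)) hσ0lo
  have hne : σ0 / E1 ≠ σ0 / E2 := by
    intro h
    have := (div_eq_div_iff hE1.ne' hE2.ne').mp h
    nlinarith
  have hinj : Set.InjOn strainField (Set.Ioo 0 L) := by
    intro s hs t ht hst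
    by_contra hne'
    rcases lt_or_gt_of_ne hne' with h | h
    · have := congrFun hst s
      simp [hstrain, h, lt_irrefl] at this
      exact hne this.symm
    · have := congrFun hst t
      simp [hstrain, h, lt_irrefl] at this
      exact hne this
  refine ⟨hinj, ?_, ?_⟩
  · intro hc
    have : (Set.Ioo (0:ℝ) L).Countable :=
      (Set.mapsTo_image _ _).countable_of_injOn hinj hc
    have hmk := Cardinal.mk_Ioo_real hL
    rw [Set.countable_coe_iff.symm, ← Cardinal.mk_le_aleph0_iff, hmk] at this
    exact (Cardinal.aleph0_lt_continuum).not_ge this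
  · intro s _
    have hconst : stressField s = fun _ => σ0 := by
      funext x
      by_cases h : x < s <;>
        simp [hstress, h, mul_div_cancel₀ σ0 hE1.ne', mul_div_cancel₀ σ0 hE2.ne']
    exact ⟨fun x => by rw [hconst], fun x => by rw [hconst]; simp⟩
end
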